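/- Let R be a polynomial ring over a field, let x, y be independent linear forms, and let a, b ∈ R be homogeneous elements of positive degree such that x, y, a, b form a regular sequence. Then the ideal I = (x,y)^2 + (ax + by) is an (x,y)-primary ideal and R/I has multiplicity 2, i.e. the localization R_{(x,y)}/I_{(x,y)} has length 2. -/

import Mathlib

open CategoryTheory

universe u

/-- `projDimLE R n M` : `M` admits a projective resolution of length at most `n`. -/
def projDimLE (R : Type u) [Ring R] : ℕ → ModuleCat.{u} R → Prop
  | 0, M => Projective M
  | n+1, M => ∃ (P : ModuleCat.{u} R) (f : P ⟶ M), Projective P ∧ Function.Surjective f ∧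
      projDimLE R n (ModuleCat.of R (LinearMap.ker f.hom))

/-- The projective dimension of a module, as an extended natural number:
the least length of a projective resolution. -/
noncomputable def projDim (R : Type u) [Ring R] (M : ModuleCat.{u} R) : ℕ∞ :=
  sInf {n : ℕ∞ | ∃ k : ℕ, projDimLE R k M ∧ n = (k : ℕ∞)}

/-- The height of an ideal: the infimum of the heights of primes containing it. -/
noncomputable def idealHeight {R : Type u} [CommRing R] (I : Ideal R) : ℕ∞ :=
  ⨅ (P : PrimeSpectrum R) (_ : I ≤ P.asIdeal), Order.height P

/-- An ideal is unmixed if every associated prime of `R/I` has height equal to the height of `I`. -/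
def IsUnmixed {R : Type u} [CommRing R] (I : Ideal R) : Prop :=
  ∀ P ∈ associatedPrimes R (R ⧸ I), idealHeight P = idealHeight I

/-- The primary component of `I` at a prime `P`: the contraction of `I R_P` to `R`. -/
noncomputable def primaryComponent {R : Type u} [CommRing R] (I : Ideal R)
    (P : PrimeSpectrum R) : Ideal R :=
  (I.map (algebraMap R (Localization.AtPrime P.asIdeal))).comap
    (algebraMap R (Localization.AtPrime P.asIdeal))

/-- The unmixed part of `I`: the intersection of the primary components of `I`
at the minimal primes of minimal height. -/
noncomputable def unmixedPart {R : Type u} [CommRing R] (I : Ideal R) : Ideal R :=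
  ⨅ (P : PrimeSpectrum R)
    (_ : P.asIdeal ∈ I.minimalPrimes ∧ Order.height P = idealHeight I),
    primaryComponent I P

/-- The length of a module: the supremum of lengths of chains of submodules. -/
noncomputable def moduleLength (R : Type u) (M : Type u) [Ring R] [AddCommGroup M]
    [Module R M] : ℕ∞ :=
  Order.height (⊤ : Submodule R M)

/-- `HasMultiplicity m J d e` : the Hilbert–Samuel multiplicity of `R/J` (of dimension `d`)
with respect to `m` is `e`, i.e. `length (R/(J + m^t)) ~ e·t^d/d!` as `t → ∞`. -/
def HasMultiplicity {R : Type u} [CommRing R] (m J : Ideal R) (d e : ℕ) : Prop :=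
  Filter.Tendsto
    (fun t : ℕ => (d.factorial : ℝ) * ((moduleLength R (R ⧸ (J ⊔ m ^ t))).toNat : ℝ) / (t : ℝ) ^ d)
    Filter.atTop (nhds (e : ℝ))

/-- A module over a Noetherian local ring is Cohen–Macaulay if there is a regular sequence
on it, inside the maximal ideal, of length equal to its dimension. -/
def IsCohenMacaulayMod (R : Type u) [CommRing R] [IsLocalRing R] (M : Type u) [AddCommGroup M]
    [Module R M] : Prop :=
  ∃ rs : List R, (∀ x ∈ rs, x ∈ IsLocalRing.maximalIdeal R) ∧
    RingTheory.Sequence.IsRegular M rs ∧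
    (rs.length : WithBot ℕ∞) = ringKrullDim (R ⧸ Module.annihilator R M)

/-- A regular local ring: a Noetherian local ring whose maximal ideal is generated by
`dim R` elements. -/
def IsRegularLocal (R : Type u) [CommRing R] [IsLocalRing R] : Prop :=
  IsNoetherianRing R ∧ ∃ s : Finset R,
    Ideal.span (s : Set R) = IsLocalRing.maximalIdeal R ∧
    (s.card : WithBot ℕ∞) = ringKrullDim R

section Aux
open MvPolynomial

variable {k : Type} [Field k] {n : ℕ}

lemma degree_eq_one_aux {d : Fin n →₀ ℕ} (hd : d.degree = 1) : ∃ i, d = Finsupp.single i 1 := by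
  have hne : d ≠ 0 := by
    intro h
    rw [h, map_zero] at hd
    exact one_ne_zero hd.symm
  obtain ⟨i, hi⟩ := Finsupp.ne_iff.mp hne
  simp only [Finsupp.coe_zero, Pi.zero_apply] at hi
  refine ⟨i, Finsupp.eq_single_iff.mpr ⟨?_, ?_⟩⟩
  · intro j hj
    simp only [Finset.mem_singleton]
    by_contra hji
    have hjs : ({i, j} : Finset (Fin n)) ⊆ d.support := by
      intro t ht
      simp only [Finset.mem_insert, Finset.mem_singleton] at ht
      rcases ht with rfl | rfl
      · exact Finsupp.mem_support_iff.mpr hi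
      · exact hj
    have h3 : d i + d j ≤ d.degree := by
      rw [Finsupp.degree_apply]
      simpa [Finset.sum_pair (Ne.symm hji)] using
        Finset.sum_le_sum_of_subset hjs (f := fun t => d t)
    have h1 : 1 ≤ d i := Nat.one_le_iff_ne_zero.mpr hi
    have h2 : 1 ≤ d j := Nat.one_le_iff_ne_zero.mpr (Finsupp.mem_support_iff.mp hj)
    omega
  · have hsub : ({i} : Finset (Fin n)) ⊆ d.support := by
      simp [Finsupp.mem_support_iff, hi]
    have h3 : d i ≤ d.degree := by
      rw [Finsupp.degree_apply]
      simpa using Finset.sum_le_sum_of_subset hsub (f := fun t => d t)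
    have h1 : 1 ≤ d i := Nat.one_le_iff_ne_zero.mpr hi
    omega

lemma hom1_mem_span {p : MvPolynomial (Fin n) k} (hp : p.IsHomogeneous 1) :
    p ∈ Submodule.span k (Set.range (X : Fin n → MvPolynomial (Fin n) k)) := by
  rw [← support_sum_monomial_coeff p]
  refine Submodule.sum_mem _ (fun d hd => ?_)
  have hcd : coeff d p ≠ 0 := MvPolynomial.mem_support_iff.mp hd
  have hdeg : d.degree = 1 := by
    by_contra h
    exact hcd (hp.coeff_eq_zero h)
  obtain ⟨i, rfl⟩ := degree_eq_one_aux hdeg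
  have : (monomial (Finsupp.single i 1)) (coeff (Finsupp.single i 1) p)
      = (coeff (Finsupp.single i 1) p) • X i := by
    rw [smul_eq_C_mul,
      show (X i : MvPolynomial (Fin n) k) = monomial (Finsupp.single i 1) 1 from rfl,
      C_mul_monomial, mul_one]
  rw [this]
  exact Submodule.smul_mem _ _ (Submodule.subset_span ⟨i, rfl⟩)

end Aux

section Aux
open MvPolynomial

variable {k : Type} [Field k] {n : ℕ}

lemma exists_dual_pair {x y : MvPolynomial (Fin n) k}
    (hindep : LinearIndependent k ![x, y]) :
    ∃ α β : MvPolynomial (Fin n) k →ₗ[k] k,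
      α x = 1 ∧ α y = 0 ∧ β x = 0 ∧ β y = 1 := by
  set b := Module.Basis.span hindep with hb
  obtain ⟨α, hα⟩ := LinearMap.exists_extend (b.coord 0)
  obtain ⟨β, hβ⟩ := LinearMap.exists_extend (b.coord 1)
  have e0 : ((b 0 : _) : MvPolynomial (Fin n) k) = x := by
    rw [hb, Module.Basis.span_apply]; rfl
  have e1 : ((b 1 : _) : MvPolynomial (Fin n) k) = y := by
    rw [hb, Module.Basis.span_apply]; rfl
  have key : ∀ (γ : MvPolynomial (Fin n) k →ₗ[k] k) (i j : Fin 2),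
      γ ∘ₗ (Submodule.span k (Set.range ![x, y])).subtype = b.coord i →
      γ (b j) = if j = i then 1 else 0 := by
    intro γ i j h
    have := congrArg (fun f => f (b j)) h
    simp only [LinearMap.comp_apply, Submodule.subtype_apply] at this
    rw [this, Module.Basis.coord_apply, Module.Basis.repr_self]
    simp [Finsupp.single_apply, eq_comm]
  refine ⟨α, β, ?_, ?_, ?_, ?_⟩
  · have := key α 0 0 hα; rw [e0] at this; simpa using this
  · have := key α 0 1 hα; rw [e1] at this; simpa using this
  · have := key β 1 0 hβ; rw [e0] at this; simpa using this
  · have := key β 1 1 hβ; rw [e1] at this; simpa using this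

end Aux

section Aux
open MvPolynomial

variable {k : Type} [Field k] {n : ℕ}

lemma span_pair_isPrime {x y : MvPolynomial (Fin n) k}
    (hx : x.IsHomogeneous 1) (hy : y.IsHomogeneous 1)
    (hindep : LinearIndependent k ![x, y])
    (hom1span : ∀ p : MvPolynomial (Fin n) k, p.IsHomogeneous 1 →
      p ∈ Submodule.span k (Set.range (X : Fin n → MvPolynomial (Fin n) k)))
    (dual : ∃ α β : MvPolynomial (Fin n) k →ₗ[k] k,
      α x = 1 ∧ α y = 0 ∧ β x = 0 ∧ β y = 1) :
    (Ideal.span {x, y}).IsPrime := by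
  obtain ⟨α, β, hαx, hαy, hβx, hβy⟩ := dual
  set P : Ideal (MvPolynomial (Fin n) k) := Ideal.span {x, y} with hP
  set Φ : MvPolynomial (Fin n) k →ₐ[k] MvPolynomial (Fin n) k :=
    aeval (fun i : Fin n => X i - C (α (X i)) * x - C (β (X i)) * y) with hΦ
  have keylin : ∀ p : MvPolynomial (Fin n) k,
      p ∈ Submodule.span k (Set.range (X : Fin n → MvPolynomial (Fin n) k)) →
      Φ p = p - C (α p) * x - C (β p) * y := by
    intro p hp
    induction hp using Submodule.span_induction with
    | mem q hq =>
      obtain ⟨i, rfl⟩ := hq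
      rw [hΦ, aeval_X]
    | zero => simp
    | add q r _ _ hq hr =>
      rw [map_add, hq, hr, map_add, map_add, map_add, map_add]
      ring
    | smul c q _ hq =>
      have h1 : Φ (c • q) = c • Φ q := map_smul Φ c q
      have h2 : α (c • q) = c * α q := by rw [map_smul]; rfl
      have h3 : β (c • q) = c * β q := by rw [map_smul]; rfl
      rw [h1, hq, h2, h3]; simp only [smul_eq_C_mul, C_mul]
      ring
  have hΦx : Φ x = 0 := by
    rw [keylin x (hom1span x hx), hαx, hβx]; simp
  have hΦy : Φ y = 0 := by
    rw [keylin y (hom1span y hy), hαy, hβy]; simp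
  have hcong : ∀ f, f - Φ f ∈ P := by
    have : (Ideal.Quotient.mkₐ k P).comp Φ = Ideal.Quotient.mkₐ k P := by
      apply MvPolynomial.algHom_ext
      intro i
      simp only [AlgHom.comp_apply, hΦ, aeval_X, Ideal.Quotient.mkₐ_eq_mk]
      rw [Ideal.Quotient.eq]
      have : X i - C (α (X i)) * x - C (β (X i)) * y - X i
          = -(C (α (X i)) * x) + -(C (β (X i)) * y) := by ring
      rw [this]
      exact Ideal.add_mem _ (neg_mem (Ideal.mul_mem_left _ _
        (Ideal.subset_span (Set.mem_insert _ _))))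
        (neg_mem (Ideal.mul_mem_left _ _
        (Ideal.subset_span (Set.mem_insert_of_mem _ rfl))))
    intro f
    have h2 := congrArg (fun g : MvPolynomial (Fin n) k →ₐ[k] _ => g f) this
    simp only [AlgHom.comp_apply, Ideal.Quotient.mkₐ_eq_mk] at h2
    exact Ideal.Quotient.eq.mp h2.symm
  have hker : P = RingHom.ker Φ.toRingHom := by
    apply le_antisymm
    · rw [hP, Ideal.span_le]
      rintro z (rfl | rfl)
      · exact hΦx
      · simpa using hΦy
    · intro f hf
      have h0 : Φ f = 0 := hf
      have := hcong f
      rwa [h0, sub_zero] at this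
  rw [hker]
  exact RingHom.ker_isPrime _

end Aux

section Aux
open RingTheory.Sequence

lemma quot_reg {R : Type} [CommRing R] {I : Ideal R} {c : R}
    (h : IsSMulRegular (R ⧸ (I • ⊤ : Submodule R R)) c) {v : R} (hv : v * c ∈ I) : v ∈ I := by
  have e : (I • ⊤ : Submodule R R) = I := by rw [smul_eq_mul, Ideal.mul_top]
  have h0 : c • (Submodule.Quotient.mk (p := (I • ⊤ : Submodule R R)) v) = c • 0 := by
    rw [smul_zero, ← Submodule.Quotient.mk_smul, Submodule.Quotient.mk_eq_zero, e, smul_eq_mul,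
      mul_comm]
    exact hv
  have h1 := h h0
  rw [Submodule.Quotient.mk_eq_zero, e] at h1
  exact h1

variable {R : Type} [CommRing R] {x y a b : R}

lemma reg_facts (hreg : IsRegular R [x, y, a, b]) :
    (∀ v, v * y ∈ Ideal.span {x} → v ∈ Ideal.span {x}) ∧
    (∀ t, t * a ∈ Ideal.span {x, y} → t ∈ Ideal.span {x, y}) ∧
    (∀ f, f * b ∈ Ideal.span {x, y, a} → f ∈ Ideal.span {x, y, a}) ∧
    Ideal.span {x, y, a} ≠ ⊤ := by
  have hw := hreg.toIsWeaklyRegular.regular_mod_prev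
  have h1 := hw 1 (by norm_num)
  have h2 := hw 2 (by norm_num)
  have h3 := hw 3 (by norm_num)
  have e1 : Ideal.ofList ([x, y, a, b].take 1) = Ideal.span {x} := by
    simp [Ideal.ofList_cons]
  have e2 : Ideal.ofList ([x, y, a, b].take 2) = Ideal.span {x, y} := by
    simp [Ideal.ofList_cons, Ideal.span_insert]
  have e3 : Ideal.ofList ([x, y, a, b].take 3) = Ideal.span {x, y, a} := by
    simp [Ideal.ofList_cons, Ideal.span_insert]
  rw [e1] at h1
  rw [e2] at h2
  rw [e3] at h3
  refine ⟨fun v hv => quot_reg h1 hv, fun t ht => quot_reg h2 ht,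
    fun f hf => quot_reg h3 hf, ?_⟩
  intro htop
  apply hreg.top_ne_smul
  have : Ideal.ofList [x, y, a, b] = ⊤ := by
    rw [eq_top_iff, ← htop, Ideal.span_le]
    rintro z (rfl | rfl | rfl) <;> exact Ideal.subset_span (by simp)
  rw [this, Submodule.top_smul]

end Aux

section Aux

variable {R : Type} [CommRing R] [IsDomain R]

lemma primary_aux {x y a b : R}
    (hx0 : x ≠ 0)
    (hyreg : ∀ v, v * y ∈ Ideal.span {x} → v ∈ Ideal.span {x})
    (hareg : ∀ t, t * a ∈ Ideal.span {x, y} → t ∈ Ideal.span {x, y})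
    (hbreg : ∀ f, f * b ∈ Ideal.span {x, y, a} → f ∈ Ideal.span {x, y, a})
    (hPprime : (Ideal.span ({x, y} : Set R)).IsPrime)
    {r s : R} (hrs : r * s ∈ Ideal.span {x ^ 2, x * y, y ^ 2, a * x + b * y})
    (hs : s ∉ Ideal.span ({x, y} : Set R)) :
    r ∈ Ideal.span {x ^ 2, x * y, y ^ 2, a * x + b * y} := by
  set P : Ideal R := Ideal.span {x, y} with hP
  set I : Ideal R := Ideal.span {x ^ 2, x * y, y ^ 2, a * x + b * y} with hI
  have hg1 : x ^ 2 ∈ I := Ideal.subset_span (by simp)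
  have hg2 : x * y ∈ I := Ideal.subset_span (by simp)
  have hg3 : y ^ 2 ∈ I := Ideal.subset_span (by simp)
  have hg4 : a * x + b * y ∈ I := Ideal.subset_span (by simp)
  have hIP : I ≤ P := by
    rw [hI, Ideal.span_le]
    rintro z (rfl | rfl | rfl | rfl)
    · exact Ideal.mem_span_pair.mpr ⟨x, 0, by ring⟩
    · exact Ideal.mem_span_pair.mpr ⟨y, 0, by ring⟩
    · exact Ideal.mem_span_pair.mpr ⟨0, y, by ring⟩
    · exact Ideal.mem_span_pair.mpr ⟨a, b, by ring⟩
  have hrP : r ∈ P := (hPprime.mem_or_mem (hIP hrs)).resolve_right hs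
  obtain ⟨f, g, hr⟩ := Ideal.mem_span_pair.mp hrP
  have hrs' := hrs
  rw [hI, show ({x ^ 2, x * y, y ^ 2, a * x + b * y} : Set R)
      = insert (x ^ 2) (insert (x * y) (insert (y ^ 2) {a * x + b * y})) from rfl,
    Ideal.mem_span_insert] at hrs'
  obtain ⟨c1, z1, hz1, hE1⟩ := hrs'
  rw [Ideal.mem_span_insert] at hz1
  obtain ⟨c2, z2, hz2, hE2⟩ := hz1
  rw [Ideal.mem_span_insert] at hz2
  obtain ⟨c3, z3, hz3, hE3⟩ := hz2
  rw [Ideal.mem_span_singleton'] at hz3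
  obtain ⟨h, hE4⟩ := hz3
  have E : r * s = c1 * x ^ 2 + c2 * (x * y) + c3 * y ^ 2 + h * (a * x + b * y) := by
    rw [hE1, hE2, hE3, ← hE4]; ring
  have hvx : (s * g - h * b - c3 * y) ∈ Ideal.span {x} := by
    apply hyreg
    exact Ideal.mem_span_singleton'.mpr
      ⟨-(s * f - h * a - c1 * x - c2 * y), by linear_combination (-s) * hr - E⟩
  obtain ⟨w, hw⟩ := Ideal.mem_span_singleton'.mp hvx
  have hsg : s * g = h * b + c3 * y + w * x := by linear_combination -hw
  have hxz : x * ((s * f - h * a - c1 * x - c2 * y) + y * w) = 0 := by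
    linear_combination s * hr + E + y * hw
  have hsf : s * f = h * a + c1 * x + c2 * y - y * w := by
    rcases mul_eq_zero.mp hxz with h' | h'
    · exact absurd h' hx0
    · linear_combination h'
  have hfbga : f * b - g * a ∈ P := by
    have hsP : s * (f * b - g * a) ∈ P := Ideal.mem_span_pair.mpr
      ⟨c1 * b - w * a, c2 * b - w * b - c3 * a, by linear_combination -b * hsf + a * hsg⟩
    exact (hPprime.mem_or_mem hsP).resolve_left hs
  have hPle : P ≤ Ideal.span {x, y, a} := by
    rw [hP, Ideal.span_le]
    rintro z (rfl | rfl) <;> exact Ideal.subset_span (by simp)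
  have hfb : f * b ∈ Ideal.span {x, y, a} := by
    have hfb' : f * b = g * a + (f * b - g * a) := by ring
    rw [hfb']
    exact add_mem (Ideal.mul_mem_left _ g (Ideal.subset_span (by simp))) (hPle hfbga)
  have hf3 := hbreg f hfb
  have hset : ({x, y, a} : Set R) = insert a {x, y} := by
    ext z; simp only [Set.mem_insert_iff, Set.mem_singleton_iff]; tauto
  rw [hset, Ideal.mem_span_insert] at hf3
  obtain ⟨t, p, hpP, hf⟩ := hf3
  obtain ⟨e1, e2, hp⟩ := Ideal.mem_span_pair.mp hpP
  have hsta : (s * t - h) * a ∈ P := Ideal.mem_span_pair.mpr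
    ⟨c1 - s * e1, c2 - w - s * e2, by linear_combination -hsf + s * hf - s * hp⟩
  have hth : s * t - h ∈ P := hareg _ hsta
  have hgtb : g - t * b ∈ P := by
    have heq : s * (g - t * b) = (-b) * (s * t - h) + c3 * y + w * x := by
      linear_combination hsg
    have hmem : s * (g - t * b) ∈ P := by
      rw [heq]
      exact add_mem (add_mem (Ideal.mul_mem_left _ _ hth)
        (Ideal.mul_mem_left _ c3 (Ideal.subset_span (by simp))))
        (Ideal.mul_mem_left _ w (Ideal.subset_span (by simp)))
    exact (hPprime.mem_or_mem hmem).resolve_left hs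
  obtain ⟨e3, e4, hq⟩ := Ideal.mem_span_pair.mp hgtb
  have hrfinal : r = t * (a * x + b * y) + e1 * x ^ 2 + (e2 + e3) * (x * y) + e4 * y ^ 2 := by
    linear_combination -hr + x * hf - x * hp - y * hq
  rw [hrfinal]
  exact add_mem (add_mem (add_mem (Ideal.mul_mem_left _ t hg4)
    (Ideal.mul_mem_left _ e1 hg1)) (Ideal.mul_mem_left _ _ hg2))
    (Ideal.mul_mem_left _ e4 hg3)

end Aux

section Aux
open MvPolynomial

variable {k : Type} [Field k] {n : ℕ}

lemma degree_split {u v : Fin n →₀ ℕ} (h : (u + v).degree ≤ 1) : u = 0 ∨ v = 0 := by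
  by_contra hc
  push_neg at hc
  obtain ⟨hu, hv⟩ := hc
  obtain ⟨i, hi⟩ := Finsupp.ne_iff.mp hu
  obtain ⟨j, hj⟩ := Finsupp.ne_iff.mp hv
  simp only [Finsupp.coe_zero, Pi.zero_apply] at hi hj
  have hdi : (u + v) i ≠ 0 := by
    rw [Finsupp.add_apply]; omega
  have hdj : (u + v) j ≠ 0 := by
    rw [Finsupp.add_apply]; omega
  rcases eq_or_ne i j with rfl | hij
  · have hsub : ({i} : Finset (Fin n)) ⊆ (u + v).support :=
      Finset.singleton_subset_iff.mpr (Finsupp.mem_support_iff.mpr hdi)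
    have h3 : (u + v) i ≤ (u + v).degree := by
      rw [Finsupp.degree_apply]
      simpa using Finset.sum_le_sum_of_subset hsub (f := fun t => (u + v) t)
    have h4 : 2 ≤ (u + v) i := by
      rw [Finsupp.add_apply]; omega
    omega
  · have hsub : ({i, j} : Finset (Fin n)) ⊆ (u + v).support := by
      intro t ht
      simp only [Finset.mem_insert, Finset.mem_singleton] at ht
      rcases ht with rfl | rfl
      · exact Finsupp.mem_support_iff.mpr hdi
      · exact Finsupp.mem_support_iff.mpr hdj
    have h3 : (u + v) i + (u + v) j ≤ (u + v).degree := by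
      rw [Finsupp.degree_apply]
      simpa [Finset.sum_pair hij] using
        Finset.sum_le_sum_of_subset hsub (f := fun t => (u + v) t)
    have h4 : 1 ≤ (u + v) i := Nat.one_le_iff_ne_zero.mpr hdi
    have h5 : 1 ≤ (u + v) j := Nat.one_le_iff_ne_zero.mpr hdj
    omega

/-- The ideal of polynomials with no coefficients in degrees ≤ 1. -/
def lowVanish (k : Type) [Field k] (n : ℕ) : Ideal (MvPolynomial (Fin n) k) where
  carrier := {f | ∀ d : Fin n →₀ ℕ, d.degree ≤ 1 → coeff d f = 0}
  zero_mem' := by intro d _; simp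
  add_mem' := by
    intro f g hf hg d hd
    rw [coeff_add, hf d hd, hg d hd, add_zero]
  smul_mem' := by
    intro c f hf d hd
    rw [smul_eq_mul]
    classical
    rw [coeff_mul]
    apply Finset.sum_eq_zero
    rintro ⟨u, v⟩ huv
    rw [Finset.HasAntidiagonal.mem_antidiagonal] at huv
    have hvd : v.degree ≤ 1 := by
      rcases degree_split (u := v) (v := u) (by rw [add_comm, huv]; exact hd) with h0 | h0
      · rw [h0, map_zero]; omega
      · have hvd' : v = d := by rw [h0, zero_add] at huv; exact huv
        rw [hvd']; exact hd
    · rw [hf v hvd, mul_zero]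

lemma mul_mem_lowVanish {p q : MvPolynomial (Fin n) k}
    (hp : coeff 0 p = 0) (hq : coeff 0 q = 0) : p * q ∈ lowVanish k n := by
  intro d hd
  classical
  rw [coeff_mul]
  apply Finset.sum_eq_zero
  rintro ⟨u, v⟩ huv
  rw [Finset.HasAntidiagonal.mem_antidiagonal] at huv
  rcases degree_split (huv ▸ hd) with h0 | h0
  · rw [h0, hp, zero_mul]
  · rw [h0, hq, mul_zero]

lemma x_not_mem_I {x y a b : MvPolynomial (Fin n) k}
    (hx : x.IsHomogeneous 1) (hy : y.IsHomogeneous 1)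
    {da db : ℕ} (hda : 1 ≤ da) (hdb : 1 ≤ db)
    (ha : a.IsHomogeneous da) (hb : b.IsHomogeneous db) (hx0 : x ≠ 0) :
    x ∉ Ideal.span {x ^ 2, x * y, y ^ 2, a * x + b * y} := by
  have hcx : coeff 0 x = 0 := hx.coeff_eq_zero (by simp [map_zero])
  have hcy : coeff 0 y = 0 := hy.coeff_eq_zero (by simp [map_zero])
  have hca : coeff 0 a = 0 := ha.coeff_eq_zero (by simp [map_zero]; omega)
  have hcb : coeff 0 b = 0 := hb.coeff_eq_zero (by simp [map_zero]; omega)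
  have hIK : Ideal.span {x ^ 2, x * y, y ^ 2, a * x + b * y} ≤ lowVanish k n := by
    rw [Ideal.span_le]
    rintro z (rfl | rfl | rfl | rfl)
    · rw [sq]; exact mul_mem_lowVanish hcx hcx
    · exact mul_mem_lowVanish hcx hcy
    · rw [sq]; exact mul_mem_lowVanish hcy hcy
    · exact add_mem (mul_mem_lowVanish hca hcx) (mul_mem_lowVanish hcb hcy)
  intro hmem
  have hK := hIK hmem
  apply hx0
  ext d
  rw [coeff_zero]
  by_cases hd : d.degree = 1
  · exact hK d (le_of_eq hd)
  · exact hx.coeff_eq_zero hd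

end Aux

section Aux

set_option maxHeartbeats 2000000 in
lemma part3 {R : Type} [CommRing R] [IsDomain R] {x y a b : R}
    (hP : (Ideal.span ({x, y} : Set R)).IsPrime)
    (haP : a ∉ Ideal.span ({x, y} : Set R))
    (hxsat : ∀ s, s ∉ Ideal.span ({x, y} : Set R) →
      x * s ∉ Ideal.span {x ^ 2, x * y, y ^ 2, a * x + b * y}) :
    haveI := hP
    Order.height (⊤ : Submodule (Localization.AtPrime (Ideal.span ({x, y} : Set R)))
      ((Localization.AtPrime (Ideal.span ({x, y} : Set R))) ⧸
        (Ideal.span {x ^ 2, x * y, y ^ 2, a * x + b * y}).map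
          (algebraMap R (Localization.AtPrime (Ideal.span ({x, y} : Set R)))))) = 2 := by
  haveI := hP
  set P : Ideal R := Ideal.span {x, y} with hPdef
  set I : Ideal R := Ideal.span {x ^ 2, x * y, y ^ 2, a * x + b * y} with hIdef
  set L : Type := Localization.AtPrime P with hLdef
  set φ : R →+* L := algebraMap R L with hφdef
  set J : Ideal L := I.map φ with hJdef
  set m : Ideal L := P.map φ with hmdef
  have hφinj : Function.Injective φ := by
    apply IsLocalization.injective (M := P.primeCompl) L
    intro s hs
    exact mem_nonZeroDivisors_of_ne_zero (fun h => hs (h ▸ P.zero_mem))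
  have hIP : I ≤ P := by
    rw [hIdef, Ideal.span_le]
    rintro z (rfl | rfl | rfl | rfl)
    · exact Ideal.mem_span_pair.mpr ⟨x, 0, by ring⟩
    · exact Ideal.mem_span_pair.mpr ⟨y, 0, by ring⟩
    · exact Ideal.mem_span_pair.mpr ⟨0, y, by ring⟩
    · exact Ideal.mem_span_pair.mpr ⟨a, b, by ring⟩
  have f1 : m = IsLocalRing.maximalIdeal L := Localization.AtPrime.map_eq_maximalIdeal
  have f2 : J ≤ m := Ideal.map_mono hIP
  have hxP : x ∈ P := Ideal.subset_span (by simp)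
  have hyP : y ∈ P := Ideal.subset_span (by simp)
  have f3 : φ x ∈ m := Ideal.mem_map_of_mem φ hxP
  have f4 : φ x ∉ J := by
    intro hmem
    rw [hJdef] at hmem
    obtain ⟨⟨i, s⟩, his⟩ := (IsLocalization.mem_map_algebraMap_iff P.primeCompl L).mp hmem
    rw [← map_mul] at his
    have : x * (s : R) = (i : R) := hφinj his
    exact hxsat s s.2 (this ▸ i.2)
  have f5 : IsUnit (φ a) := IsLocalization.map_units L (⟨a, haP⟩ : P.primeCompl)
  have f6 : m = Ideal.span {φ x, φ y} := by
    show Ideal.map φ (Ideal.span {x, y}) = _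
    rw [Ideal.map_span, Set.image_insert_eq, Set.image_singleton]
  have hgen4 : a * x + b * y ∈ I := Ideal.subset_span (by simp)
  have f8 : m * m ≤ J := by
    rw [f6, Ideal.span_mul_span]
    rw [Ideal.span_le]
    intro z hz
    rw [Set.mem_mul] at hz
    obtain ⟨s, hs, t, ht, rfl⟩ := hz
    have hx2 : φ x * φ x ∈ J := by
      rw [← map_mul]
      exact Ideal.mem_map_of_mem φ (Ideal.subset_span (by simp [sq]))
    have hxy : φ x * φ y ∈ J := by
      rw [← map_mul]
      exact Ideal.mem_map_of_mem φ (Ideal.subset_span (by simp))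
    have hy2 : φ y * φ y ∈ J := by
      rw [← map_mul]
      exact Ideal.mem_map_of_mem φ (Ideal.subset_span (by simp [sq]))
    rcases hs with rfl | rfl <;> rcases ht with rfl | rfl
    · exact hx2
    · exact hxy
    · exact mul_comm (φ y) (φ x) ▸ hxy
    · exact hy2
  have hmne : m ≠ ⊤ := by
    rw [f1]
    exact (IsLocalRing.maximalIdeal.isMaximal L).ne_top
  -- classification of ideals between J and ⊤
  have classif : ∀ Q : Ideal L, J ≤ Q → Q = J ∨ Q = m ∨ Q = ⊤ := by
    intro Q hJQ
    by_cases hQm : Q ≤ m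
    · by_cases hQJ : Q ≤ J
      · exact Or.inl (le_antisymm hQJ hJQ)
      · right; left
        obtain ⟨q, hqQ, hqJ⟩ := SetLike.not_le_iff_exists.mp hQJ
        have hqm : q ∈ m := hQm hqQ
        rw [f6] at hqm
        obtain ⟨f, g, hq⟩ := Ideal.mem_span_pair.mp hqm
        set u : L := g * φ a - f * φ b with hu
        have hgen : φ (a * x + b * y) ∈ J := Ideal.mem_map_of_mem φ hgen4
        have hkey : u * φ y = φ a * q - f * φ (a * x + b * y) := by
          rw [hu, map_add, map_mul, map_mul, ← hq]; ring
        have huy : u * φ y ∈ Q := by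
          rw [hkey]
          exact sub_mem (Q.mul_mem_left _ hqQ) (Q.mul_mem_left _ (hJQ hgen))
        by_cases hum : u ∈ m
        · exfalso
          have huyJ : u * φ y ∈ J := f8 (Ideal.mul_mem_mul hum (Ideal.mem_map_of_mem φ hyP))
          have haq : φ a * q ∈ J := by
            have : φ a * q = u * φ y + f * φ (a * x + b * y) := by rw [hkey]; ring
            rw [this]
            exact add_mem huyJ (J.mul_mem_left _ hgen)
          obtain ⟨au, hau⟩ := f5
          have : q ∈ J := by
            have : (↑au⁻¹ : L) * (φ a * q) ∈ J := J.mul_mem_left _ haq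
            rwa [← mul_assoc, ← hau, Units.inv_mul, one_mul] at this
          exact hqJ this
        · have huu : IsUnit u := by
            rw [f1, IsLocalRing.mem_maximalIdeal, mem_nonunits_iff, not_not] at hum
            exact hum
          obtain ⟨uu, huu'⟩ := huu
          have hyQ : φ y ∈ Q := by
            have : (↑uu⁻¹ : L) * (u * φ y) ∈ Q := Q.mul_mem_left _ huy
            rwa [← mul_assoc, ← huu', Units.inv_mul, one_mul] at this
          have hxQ : φ x ∈ Q := by
            have h1 : φ a * φ x ∈ Q := by
              have : φ a * φ x = φ (a * x + b * y) - φ b * φ y := by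
                rw [map_add, map_mul, map_mul]; ring
              rw [this]
              exact sub_mem (hJQ hgen) (Q.mul_mem_left _ hyQ)
            obtain ⟨au, hau⟩ := f5
            have : (↑au⁻¹ : L) * (φ a * φ x) ∈ Q := Q.mul_mem_left _ h1
            rwa [← mul_assoc, ← hau, Units.inv_mul, one_mul] at this
          refine le_antisymm hQm ?_
          rw [f6, Ideal.span_le]
          rintro z (rfl | rfl)
          · exact hxQ
          · exact hyQ
    · right; right
      obtain ⟨q, hqQ, hqm⟩ := SetLike.not_le_iff_exists.mp hQm
      have : IsUnit q := by
        rw [f1, IsLocalRing.mem_maximalIdeal, mem_nonunits_iff, not_not] at hqm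
        exact hqm
      exact Ideal.eq_top_of_isUnit_mem Q hqQ this
  -- submodule classification
  classical
  set N : Submodule L (L ⧸ J) := Submodule.map J.mkQ (m : Submodule L L) with hN
  have subclassif : ∀ Q : Submodule L (L ⧸ J), Q = ⊥ ∨ Q = N ∨ Q = ⊤ := by
    intro Q
    have hQeq : Submodule.map J.mkQ (Submodule.comap J.mkQ Q) = Q := by
      rw [Submodule.map_comap_eq, Submodule.range_mkQ, top_inf_eq]
    have hJle : J ≤ Submodule.comap J.mkQ Q := by
      intro z hz
      have hz0 : J.mkQ z = 0 := by
        rw [Submodule.mkQ_apply, Submodule.Quotient.mk_eq_zero]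
        exact hz
      show J.mkQ z ∈ Q
      rw [hz0]
      exact Q.zero_mem
    rcases classif (Submodule.comap J.mkQ Q) hJle with h | h | h
    · left
      rw [← hQeq, h]
      apply eq_bot_iff.mpr
      rintro w ⟨z, hz, rfl⟩
      rw [Submodule.mem_bot, Submodule.mkQ_apply, Submodule.Quotient.mk_eq_zero]
      exact hz
    · right; left
      rw [← hQeq, h]
    · right; right
      rw [← hQeq, h, Submodule.map_top, Submodule.range_mkQ]
  have hNbot : N ≠ ⊥ := by
    intro h
    have h1 : J.mkQ (φ x) ∈ N := Submodule.mem_map_of_mem f3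
    rw [h, Submodule.mem_bot, Submodule.mkQ_apply, Submodule.Quotient.mk_eq_zero] at h1
    exact f4 h1
  have hNtop : N ≠ ⊤ := by
    intro h
    have h2 : Submodule.comap J.mkQ N = ⊤ := by rw [h, Submodule.comap_top]
    rw [hN, Submodule.comap_map_eq, Submodule.ker_mkQ] at h2
    have h3 : (m : Submodule L L) ⊔ J = m := sup_eq_left.mpr f2
    rw [h3] at h2
    exact hmne h2
  have hbotN : (⊥ : Submodule L (L ⧸ J)) < N := lt_of_le_of_ne bot_le (Ne.symm hNbot)
  have hNtop' : N < ⊤ := lt_of_le_of_ne le_top hNtop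
  have hbotTop : (⊥ : Submodule L (L ⧸ J)) ≠ ⊤ := (hbotN.trans hNtop').ne
  -- lower bound
  let pser : LTSeries (Submodule L (L ⧸ J)) :=
    ⟨2, ![⊥, N, ⊤], by
      intro i
      fin_cases i
      · exact hbotN
      · exact hNtop'⟩
  have hge : (2 : ℕ∞) ≤ Order.height (⊤ : Submodule L (L ⧸ J)) := by
    have hlast : pser.last = ⊤ := rfl
    have := Order.length_le_height_last (p := pser)
    rw [hlast] at this
    exact this
  -- upper bound
  set rk : Submodule L (L ⧸ J) → ℕ :=
    fun Q => if Q = ⊥ then 0 else if Q = ⊤ then 2 else 1 with hrk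
  have rk0 : rk ⊥ = 0 := by simp [hrk]
  have rk2 : rk ⊤ = 2 := by simp [hrk, Ne.symm hbotTop]
  have rk1 : rk N = 1 := by simp [hrk, hNbot, hNtop]
  have hrkmono : StrictMono rk := by
    intro A B hAB
    rcases subclassif A with rfl | rfl | rfl <;> rcases subclassif B with rfl | rfl | rfl
    · exact absurd hAB (lt_irrefl _)
    · rw [rk0, rk1]; norm_num
    · rw [rk0, rk2]; norm_num
    · exact absurd hAB (by simp)
    · exact absurd hAB (lt_irrefl _)
    · rw [rk1, rk2]; norm_num
    · exact absurd hAB (by simp)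
    · exact absurd hAB (by simp)
    · exact absurd hAB (lt_irrefl _)
  have hle : Order.height (⊤ : Submodule L (L ⧸ J)) ≤ 2 := by
    have h1 := Order.height_le_height_apply_of_strictMono rk hrkmono ⊤
    rw [rk2, Order.height_nat] at h1
    exact_mod_cast h1
  exact le_antisymm hle hge

end Aux

set_option maxHeartbeats 2000000 in
open MvPolynomial RingTheory.Sequence in
theorem stmt7 {k : Type} [Field k] (n : ℕ)
    (x y a b : MvPolynomial (Fin n) k)
    (hx : x.IsHomogeneous 1) (hy : y.IsHomogeneous 1)
    (hindep : LinearIndependent k ![x, y])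
    (da db : ℕ) (hda : 1 ≤ da) (hdb : 1 ≤ db)
    (ha : a.IsHomogeneous da) (hb : b.IsHomogeneous db)
    (hreg : IsRegular (MvPolynomial (Fin n) k) [x, y, a, b]) :
    (Ideal.span {x ^ 2, x * y, y ^ 2, a * x + b * y}).radical = Ideal.span {x, y} ∧
    (Ideal.span {x ^ 2, x * y, y ^ 2, a * x + b * y}).IsPrimary ∧
    ∀ (hP : (Ideal.span ({x, y} : Set (MvPolynomial (Fin n) k))).IsPrime),
      haveI := hP
      moduleLength (Localization.AtPrime (Ideal.span ({x, y} : Set (MvPolynomial (Fin n) k))))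
        (Localization.AtPrime (Ideal.span ({x, y} : Set (MvPolynomial (Fin n) k))) ⧸
          (Ideal.span {x ^ 2, x * y, y ^ 2, a * x + b * y}).map
            (algebraMap (MvPolynomial (Fin n) k)
              (Localization.AtPrime (Ideal.span ({x, y} : Set (MvPolynomial (Fin n) k)))))) = 2 := by
  classical
  set P : Ideal (MvPolynomial (Fin n) k) := Ideal.span {x, y} with hPdef
  set I : Ideal (MvPolynomial (Fin n) k) := Ideal.span {x ^ 2, x * y, y ^ 2, a * x + b * y}
    with hIdef
  have hx0 : x ≠ 0 := by simpa using hindep.ne_zero 0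
  have hPprime : P.IsPrime :=
    span_pair_isPrime hx hy hindep (fun p hp => hom1_mem_span hp) (exists_dual_pair hindep)
  obtain ⟨hyreg, hareg, hbreg, hne3⟩ := reg_facts hreg
  have haP : a ∉ P := by
    intro h
    have h1 : (1 : MvPolynomial (Fin n) k) ∈ P := hareg 1 (by rw [one_mul]; exact h)
    exact hPprime.ne_top (Ideal.eq_top_iff_one P |>.mpr h1)
  have hIP : I ≤ P := by
    rw [hIdef, Ideal.span_le]
    rintro z (rfl | rfl | rfl | rfl)
    · exact Ideal.mem_span_pair.mpr ⟨x, 0, by ring⟩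
    · exact Ideal.mem_span_pair.mpr ⟨y, 0, by ring⟩
    · exact Ideal.mem_span_pair.mpr ⟨0, y, by ring⟩
    · exact Ideal.mem_span_pair.mpr ⟨a, b, by ring⟩
  have hg1 : x ^ 2 ∈ I := Ideal.subset_span (by simp)
  have hg3 : y ^ 2 ∈ I := Ideal.subset_span (by simp)
  have rad_eq : I.radical = P := by
    apply le_antisymm
    · exact (Ideal.IsPrime.radical_le_iff hPprime).mpr hIP
    · rw [hPdef, Ideal.span_le]
      rintro z (rfl | rfl)
      · exact ⟨2, hg1⟩
      · exact ⟨2, hg3⟩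
  have hIne : I ≠ ⊤ := by
    intro h
    exact hPprime.ne_top (top_le_iff.mp (h ▸ hIP))
  have hprimary : I.IsPrimary := by
    rw [Ideal.isPrimary_iff]
    refine ⟨hIne, ?_⟩
    intro r s hrs
    by_cases hs : s ∈ P
    · right; rw [rad_eq]; exact hs
    · left
      exact primary_aux hx0 hyreg hareg hbreg hPprime hrs hs
  have hxI : x ∉ I := x_not_mem_I hx hy hda hdb ha hb hx0
  have hxsat : ∀ s, s ∉ P → x * s ∉ I := by
    intro s hs hmem
    exact hxI (primary_aux hx0 hyreg hareg hbreg hPprime hmem hs)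
  refine ⟨rad_eq, hprimary, ?_⟩
  intro hP'
  exact part3 hP' haP hxsat
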